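/- For every φ ∈ P̃₄ there exist e₁, e₂, e₃ ∈ {−1,1} and a, b, c ∈ ℝ such that the map ψ(t) = (e₁t²+at, e₂t³+bt, e₃t⁴+ct) is a polynomial knot and φ and ψ are joined by a continuous path inside P̃₄. -/
import Mathlib


open Polynomial

/-- `(f, g, h)` defines a polynomial knot: the map `t ↦ (f t, g t, h t)` is injective
and its derivative never vanishes. -/
def IsPolyKnot (f g h : Polynomial ℝ) : Prop :=
  Function.Injective (fun t : ℝ => (f.eval t, g.eval t, h.eval t)) ∧
  ∀ t : ℝ, ((derivative f).eval t, (derivative g).eval t, (derivative h).eval t)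
      ≠ ((0 : ℝ), (0 : ℝ), (0 : ℝ))

/-- First component polynomial of a tuple in `A₄ ≅ ℝ¹²`, with coefficient tuple
`(a₀, a₁, a₂, b₀, b₁, b₂, b₃, c₀, c₁, c₂, c₃, c₄)`. -/
noncomputable def fPoly (x : Fin 12 → ℝ) : Polynomial ℝ :=
  C (x 2) * X ^ 2 + C (x 1) * X + C (x 0)

/-- Second component polynomial of a tuple in `A₄ ≅ ℝ¹²`. -/
noncomputable def gPoly (x : Fin 12 → ℝ) : Polynomial ℝ :=
  C (x 6) * X ^ 3 + C (x 5) * X ^ 2 + C (x 4) * X + C (x 3)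

/-- Third component polynomial of a tuple in `A₄ ≅ ℝ¹²`. -/
noncomputable def hPoly (x : Fin 12 → ℝ) : Polynomial ℝ :=
  C (x 11) * X ^ 4 + C (x 10) * X ^ 3 + C (x 9) * X ^ 2 + C (x 8) * X + C (x 7)

/-- The set `P₄ ⊆ A₄ ≅ ℝ¹²` of tuples defining a polynomial knot `(f, g, h)` with
`deg f < deg g < deg h ≤ 4`. -/
def P4 : Set (Fin 12 → ℝ) :=
  {x | IsPolyKnot (fPoly x) (gPoly x) (hPoly x) ∧
    (fPoly x).natDegree < (gPoly x).natDegree ∧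
    (gPoly x).natDegree < (hPoly x).natDegree ∧ (hPoly x).natDegree ≤ 4}

/-- The set `P̃₄ ⊆ A₄ ≅ ℝ¹²` of tuples defining a polynomial knot `(f, g, h)` with
`deg f = 2`, `deg g = 3`, `deg h = 4`. -/
def Pt4 : Set (Fin 12 → ℝ) :=
  {x | IsPolyKnot (fPoly x) (gPoly x) (hPoly x) ∧
    (fPoly x).natDegree = 2 ∧ (gPoly x).natDegree = 3 ∧ (hPoly x).natDegree = 4}

lemma evalf (x : Fin 12 → ℝ) (t : ℝ) : (fPoly x).eval t = x 2*t^2 + x 1*t + x 0 := by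
  simp [fPoly]
lemma evalg (x : Fin 12 → ℝ) (t : ℝ) : (gPoly x).eval t = x 6*t^3 + x 5*t^2 + x 4*t + x 3 := by
  simp [gPoly]
lemma evalh (x : Fin 12 → ℝ) (t : ℝ) :
    (hPoly x).eval t = x 11*t^4 + x 10*t^3 + x 9*t^2 + x 8*t + x 7 := by
  simp [hPoly]
lemma evalDf (x : Fin 12 → ℝ) (t : ℝ) : (derivative (fPoly x)).eval t = 2*x 2*t + x 1 := by
  simp [fPoly]; ring
lemma evalDg (x : Fin 12 → ℝ) (t : ℝ) :
    (derivative (gPoly x)).eval t = 3*x 6*t^2 + 2*x 5*t + x 4 := by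
  simp [gPoly]; ring
lemma evalDh (x : Fin 12 → ℝ) (t : ℝ) :
    (derivative (hPoly x)).eval t = 4*x 11*t^3 + 3*x 10*t^2 + 2*x 9*t + x 8 := by
  simp [hPoly]; ring

def Knot2 (a0 a1 a2 b0 b1 b2 b3 c0 c1 c2 c3 c4 : ℝ) : Prop :=
  Function.Injective (fun t : ℝ =>
      (a2*t^2 + a1*t + a0, b3*t^3 + b2*t^2 + b1*t + b0,
        c4*t^4 + c3*t^3 + c2*t^2 + c1*t + c0)) ∧
  ∀ t : ℝ, (2*a2*t + a1, 3*b3*t^2 + 2*b2*t + b1, 4*c4*t^3 + 3*c3*t^2 + 2*c2*t + c1)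
      ≠ ((0 : ℝ), (0 : ℝ), (0 : ℝ))

lemma isPolyKnot_iff (x : Fin 12 → ℝ) :
    IsPolyKnot (fPoly x) (gPoly x) (hPoly x) ↔
      Knot2 (x 0) (x 1) (x 2) (x 3) (x 4) (x 5) (x 6) (x 7) (x 8) (x 9) (x 10) (x 11) := by
  unfold IsPolyKnot Knot2
  simp only [evalf, evalg, evalh, evalDf, evalDg, evalDh]

lemma mem_Pt4_iff (x : Fin 12 → ℝ) :
    x ∈ Pt4 ↔
      Knot2 (x 0) (x 1) (x 2) (x 3) (x 4) (x 5) (x 6) (x 7) (x 8) (x 9) (x 10) (x 11) ∧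
        x 2 ≠ 0 ∧ x 6 ≠ 0 ∧ x 11 ≠ 0 := by
  constructor
  · rintro ⟨hk, h2, h3, h4⟩
    refine ⟨(isPolyKnot_iff x).mp hk, ?_, ?_, ?_⟩
    · intro h0
      have h1 : (fPoly x).natDegree ≤ 1 := by
        have he : fPoly x = C (x 1) * X + C (x 0) := by unfold fPoly; rw [h0]; simp
        rw [he]; compute_degree
      omega
    · intro h0
      have h1 : (gPoly x).natDegree ≤ 2 := by
        have he : gPoly x = C (x 5) * X ^ 2 + C (x 4) * X + C (x 3) := by
          unfold gPoly; rw [h0]; simp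
        rw [he]; compute_degree
      omega
    · intro h0
      have h1 : (hPoly x).natDegree ≤ 3 := by
        have he : hPoly x = C (x 10) * X ^ 3 + C (x 9) * X ^ 2 + C (x 8) * X + C (x 7) := by
          unfold hPoly; rw [h0]; simp
        rw [he]; compute_degree
      omega
  · rintro ⟨hk, h2, h6, h11⟩
    refine ⟨(isPolyKnot_iff x).mpr hk, ?_, ?_, ?_⟩
    · unfold fPoly; compute_degree!
    · unfold gPoly; compute_degree!
    · unfold hPoly; compute_degree!

lemma knot2_shear (s lam mu kap a0 a1 a2 b0 b1 b2 b3 c0 c1 c2 c3 c4 : ℝ)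
    (hlam : lam * a2 = b2) (hmu : mu * b3 = c3) (hkap : kap * a2 = mu * b2 - c2)
    (h : Knot2 a0 a1 a2 b0 b1 b2 b3 c0 c1 c2 c3 c4) :
    Knot2 ((1-s)*a0 + s*0) ((1-s)*a1 + s*a1) ((1-s)*a2 + s*a2)
      ((1-s)*b0 + s*0) ((1-s)*b1 + s*(b1 - lam*a1)) ((1-s)*b2 + s*0) ((1-s)*b3 + s*b3)
      ((1-s)*c0 + s*0) ((1-s)*c1 + s*(c1 - mu*b1 + kap*a1)) ((1-s)*c2 + s*0)
      ((1-s)*c3 + s*0) ((1-s)*c4 + s*c4) := by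
  constructor
  · intro t1 t2 heq
    simp only [Prod.mk.injEq] at heq
    obtain ⟨e1, e2, e3⟩ := heq
    have hF : a2*t1^2 + a1*t1 + a0 = a2*t2^2 + a1*t2 + a0 := by linear_combination e1
    have hG : b3*t1^3 + b2*t1^2 + b1*t1 + b0 = b3*t2^3 + b2*t2^2 + b1*t2 + b0 := by
      linear_combination e2 + (s*lam)*hF - s*(t1^2 - t2^2)*hlam
    have hH : c4*t1^4 + c3*t1^3 + c2*t1^2 + c1*t1 + c0
        = c4*t2^4 + c3*t2^3 + c2*t2^2 + c1*t2 + c0 := by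
      linear_combination e3 + (s*mu)*hG - (s*kap)*hF - s*(t1^3 - t2^3)*hmu
        + s*(t1^2 - t2^2)*hkap
    exact h.1 (by simp only [Prod.mk.injEq]; exact ⟨hF, hG, hH⟩)
  · intro t hbad
    simp only [Prod.mk.injEq] at hbad
    obtain ⟨d1, d2, d3⟩ := hbad
    apply h.2 t
    have h1 : 2*a2*t + a1 = 0 := by linear_combination d1
    have h2 : 3*b3*t^2 + 2*b2*t + b1 = 0 := by
      linear_combination d2 + (s*lam)*h1 - (2*s*t)*hlam
    have h3 : 4*c4*t^3 + 3*c3*t^2 + 2*c2*t + c1 = 0 := by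
      linear_combination d3 + (s*mu)*h2 - (s*kap)*h1 - (3*s*t^2)*hmu + (2*s*t)*hkap
    simp only [Prod.mk.injEq]
    exact ⟨h1, h2, h3⟩

lemma knot2_scale (s u v w a1 a2 b1 b3 c1 c4 : ℝ)
    (hU : (1-s) + s*u ≠ 0) (hV : (1-s) + s*v ≠ 0) (hW : (1-s) + s*w ≠ 0)
    (h : Knot2 0 a1 a2 0 b1 0 b3 0 c1 0 0 c4) :
    Knot2 ((1-s)*0 + s*0) ((1-s)*a1 + s*(u*a1)) ((1-s)*a2 + s*(u*a2))
      ((1-s)*0 + s*0) ((1-s)*b1 + s*(v*b1)) ((1-s)*0 + s*0) ((1-s)*b3 + s*(v*b3))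
      ((1-s)*0 + s*0) ((1-s)*c1 + s*(w*c1)) ((1-s)*0 + s*0) ((1-s)*0 + s*0)
      ((1-s)*c4 + s*(w*c4)) := by
  constructor
  · intro t1 t2 heq
    simp only [Prod.mk.injEq] at heq
    obtain ⟨e1, e2, e3⟩ := heq
    have hF : a2*t1^2 + a1*t1 = a2*t2^2 + a1*t2 :=
      mul_left_cancel₀ hU (by linear_combination e1)
    have hG : b3*t1^3 + b1*t1 = b3*t2^3 + b1*t2 :=
      mul_left_cancel₀ hV (by linear_combination e2)
    have hH : c4*t1^4 + c1*t1 = c4*t2^4 + c1*t2 :=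
      mul_left_cancel₀ hW (by linear_combination e3)
    refine h.1 (?_ : _ = _)
    simp only [Prod.mk.injEq]
    refine ⟨by linear_combination hF, by linear_combination hG, by linear_combination hH⟩
  · intro t hbad
    simp only [Prod.mk.injEq] at hbad
    obtain ⟨d1, d2, d3⟩ := hbad
    apply h.2 t
    have h1 : 2*a2*t + a1 = 0 := by
      rcases mul_eq_zero.mp (show ((1-s) + s*u) * (2*a2*t + a1) = 0 by linear_combination d1)
        with h' | h'
      · exact absurd h' hU
      · exact h'
    have h2 : 3*b3*t^2 + b1 = 0 := by
      rcases mul_eq_zero.mp (show ((1-s) + s*v) * (3*b3*t^2 + b1) = 0 by linear_combination d2)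
        with h' | h'
      · exact absurd h' hV
      · exact h'
    have h3 : 4*c4*t^3 + c1 = 0 := by
      rcases mul_eq_zero.mp (show ((1-s) + s*w) * (4*c4*t^3 + c1) = 0 by linear_combination d3)
        with h' | h'
      · exact absurd h' hW
      · exact h'
    simp only [Prod.mk.injEq]
    exact ⟨by linear_combination h1, by linear_combination h2, by linear_combination h3⟩

def seg (A B : Fin 12 → ℝ) (s : ℝ) : Fin 12 → ℝ := fun i => (1-s)*A i + s*B i

lemma joined_seg {A B : Fin 12 → ℝ} (h : ∀ s ∈ Set.Icc (0:ℝ) 1, seg A B s ∈ Pt4) :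
    JoinedIn Pt4 A B := by
  have hc : Continuous fun s : ℝ => seg A B s := by
    refine continuous_pi fun i => ?_
    show Continuous fun s : ℝ => (1-s)*A i + s*B i
    fun_prop
  have h0 : seg A B 0 = A := by funext i; show (1-0)*A i + 0*B i = A i; ring
  have h1 : seg A B 1 = B := by funext i; show (1-1)*A i + 1*B i = B i; ring
  refine ⟨⟨⟨fun t : unitInterval => seg A B t, hc.comp continuous_subtype_val⟩, ?_, ?_⟩,
    fun t => h t t.2⟩
  · show seg A B ((0 : unitInterval) : ℝ) = A
    rw [show ((0 : unitInterval) : ℝ) = 0 from rfl, h0]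
  · show seg A B ((1 : unitInterval) : ℝ) = B
    rw [show ((1 : unitInterval) : ℝ) = 1 from rfl, h1]


/-- For every `φ ∈ P̃₄` there exist `e₁, e₂, e₃ ∈ {−1,1}` and `a, b, c ∈ ℝ`
such that `ψ(t) = (e₁t²+at, e₂t³+bt, e₃t⁴+ct)` is a polynomial knot and `φ` is joined
to `ψ` by a path inside `P̃₄`. -/
theorem stmt_10 (x : Fin 12 → ℝ) (hx : x ∈ Pt4) :
    ∃ e₁ e₂ e₃ a b c : ℝ, (e₁ = 1 ∨ e₁ = -1) ∧ (e₂ = 1 ∨ e₂ = -1) ∧ (e₃ = 1 ∨ e₃ = -1) ∧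
      IsPolyKnot (C e₁ * X ^ 2 + C a * X) (C e₂ * X ^ 3 + C b * X)
        (C e₃ * X ^ 4 + C c * X) ∧
      JoinedIn Pt4 x ![0, a, e₁, 0, b, 0, e₂, 0, c, 0, 0, e₃] := by
  obtain ⟨hK, ha2, ha6, ha11⟩ := (mem_Pt4_iff x).mp hx
  obtain ⟨lam, hlam⟩ : ∃ l, l * x 2 = x 5 := ⟨x 5 / x 2, div_mul_cancel₀ _ ha2⟩
  obtain ⟨mu, hmu⟩ : ∃ m, m * x 6 = x 10 := ⟨x 10 / x 6, div_mul_cancel₀ _ ha6⟩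
  obtain ⟨kap, hkap⟩ : ∃ k, k * x 2 = mu * x 5 - x 9 :=
    ⟨(mu * x 5 - x 9) / x 2, div_mul_cancel₀ _ ha2⟩
  have mkpm : ∀ r : ℝ, r ≠ 0 → ∃ q : ℝ, 0 < q ∧ (q * r = 1 ∨ q * r = -1) := by
    intro r hr
    refine ⟨|r|⁻¹, inv_pos.2 (abs_pos.2 hr), ?_⟩
    rcases hr.lt_or_gt with h | h
    · right; rw [abs_of_neg h, inv_neg, neg_mul, inv_mul_cancel₀ h.ne]
    · left; rw [abs_of_pos h, inv_mul_cancel₀ h.ne']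
  obtain ⟨u, hupos, hue⟩ := mkpm _ ha2
  obtain ⟨v, hvpos, hve⟩ := mkpm _ ha6
  obtain ⟨w, hwpos, hwe⟩ := mkpm _ ha11
  -- the intermediate point y  (constants and middle coefficients killed)
  have jA : JoinedIn Pt4 x
      ![0, x 1, x 2, 0, x 4 - lam*x 1, 0, x 6, 0, x 8 - mu*x 4 + kap*x 1, 0, 0, x 11] := by
    apply joined_seg
    intro s _
    refine (mem_Pt4_iff _).mpr ⟨?_, ?_, ?_, ?_⟩
    · exact knot2_shear s lam mu kap (x 0) (x 1) (x 2) (x 3) (x 4) (x 5) (x 6) (x 7) (x 8)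
        (x 9) (x 10) (x 11) hlam hmu hkap hK
    · exact fun h0 : (1-s)*x 2 + s*(x 2) = 0 => ha2 (by linear_combination h0)
    · exact fun h0 : (1-s)*x 6 + s*(x 6) = 0 => ha6 (by linear_combination h0)
    · exact fun h0 : (1-s)*x 11 + s*(x 11) = 0 => ha11 (by linear_combination h0)
  have hKy : Knot2 0 (x 1) (x 2) 0 (x 4 - lam*x 1) 0 (x 6) 0 (x 8 - mu*x 4 + kap*x 1) 0 0
      (x 11) := ((mem_Pt4_iff _).mp jA.target_mem).1
  have posne : ∀ q : ℝ, 0 < q → ∀ s ∈ Set.Icc (0:ℝ) 1, (1-s) + s*q ≠ 0 := by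
    intro q hq s hs
    have : 0 < (1-s) + s*q := by
      rcases eq_or_lt_of_le hs.1 with h | h
      · rw [← h]; norm_num
      · have := mul_pos h hq
        have := hs.2
        linarith
    exact this.ne'
  have jB : JoinedIn Pt4
      ![0, x 1, x 2, 0, x 4 - lam*x 1, 0, x 6, 0, x 8 - mu*x 4 + kap*x 1, 0, 0, x 11]
      ![0, u*x 1, u*x 2, 0, v*(x 4 - lam*x 1), 0, v*x 6, 0,
        w*(x 8 - mu*x 4 + kap*x 1), 0, 0, w*x 11] := by
    apply joined_seg
    intro s hs
    have hU := posne u hupos s hs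
    have hV := posne v hvpos s hs
    have hW := posne w hwpos s hs
    refine (mem_Pt4_iff _).mpr ⟨?_, ?_, ?_, ?_⟩
    · exact knot2_scale s u v w (x 1) (x 2) (x 4 - lam*x 1) (x 6) (x 8 - mu*x 4 + kap*x 1)
        (x 11) hU hV hW hKy
    · exact fun h0 : (1-s)*(x 2) + s*(u*x 2) = 0 =>
        (mul_ne_zero hU ha2) (by linear_combination h0)
    · exact fun h0 : (1-s)*(x 6) + s*(v*x 6) = 0 =>
        (mul_ne_zero hV ha6) (by linear_combination h0)
    · exact fun h0 : (1-s)*(x 11) + s*(w*x 11) = 0 =>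
        (mul_ne_zero hW ha11) (by linear_combination h0)
  refine ⟨u*x 2, v*x 6, w*x 11, u*x 1, v*(x 4 - lam*x 1), w*(x 8 - mu*x 4 + kap*x 1),
    hue, hve, hwe, ?_, jA.trans jB⟩
  obtain ⟨hknot, -, -, -⟩ := jB.target_mem
  have hf : fPoly ![0, u*x 1, u*x 2, 0, v*(x 4 - lam*x 1), 0, v*x 6, 0,
      w*(x 8 - mu*x 4 + kap*x 1), 0, 0, w*x 11] = C (u*x 2) * X ^ 2 + C (u*x 1) * X := by
    rw [show fPoly ![0, u*x 1, u*x 2, 0, v*(x 4 - lam*x 1), 0, v*x 6, 0,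
      w*(x 8 - mu*x 4 + kap*x 1), 0, 0, w*x 11]
        = C (u*x 2) * X ^ 2 + C (u*x 1) * X + C 0 from rfl]
    simp
  have hg : gPoly ![0, u*x 1, u*x 2, 0, v*(x 4 - lam*x 1), 0, v*x 6, 0,
      w*(x 8 - mu*x 4 + kap*x 1), 0, 0, w*x 11]
        = C (v*x 6) * X ^ 3 + C (v*(x 4 - lam*x 1)) * X := by
    rw [show gPoly ![0, u*x 1, u*x 2, 0, v*(x 4 - lam*x 1), 0, v*x 6, 0,
      w*(x 8 - mu*x 4 + kap*x 1), 0, 0, w*x 11]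
        = C (v*x 6) * X ^ 3 + C 0 * X ^ 2 + C (v*(x 4 - lam*x 1)) * X + C 0 from rfl]
    simp
  have hh : hPoly ![0, u*x 1, u*x 2, 0, v*(x 4 - lam*x 1), 0, v*x 6, 0,
      w*(x 8 - mu*x 4 + kap*x 1), 0, 0, w*x 11]
        = C (w*x 11) * X ^ 4 + C (w*(x 8 - mu*x 4 + kap*x 1)) * X := by
    rw [show hPoly ![0, u*x 1, u*x 2, 0, v*(x 4 - lam*x 1), 0, v*x 6, 0,
      w*(x 8 - mu*x 4 + kap*x 1), 0, 0, w*x 11]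
        = C (w*x 11) * X ^ 4 + C 0 * X ^ 3 + C 0 * X ^ 2
          + C (w*(x 8 - mu*x 4 + kap*x 1)) * X + C 0 from rfl]
    simp
  rw [← hf, ← hg, ← hh]
  exact hknot
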